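/- For the Count-Min sketch with width w and depth d, for any item i the estimate â_i satisfies a_i ≤ â_i always, and â_i ≤ a_i + (e/w)‖a‖₁ with probability at least 1 − e^{−d}, where a is the nonnegative frequency vector. -/

import Mathlib

open MeasureTheory ProbabilityTheory

/-- The "excess" of row `j` of the Count-Min sketch at item `i₀`. -/
def cmsX {Ω : Type*} {m w d : ℕ} (H : Ω → Fin d → Fin m → Fin w) (a : Fin m → ℝ)
    (i₀ : Fin m) (j : Fin d) (ω : Ω) : ℝ :=
  ∑ i ∈ Finset.univ.erase i₀, if H ω j i = H ω j i₀ then a i else 0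

theorem count_min_sketch_guarantee {Ω : Type*} [MeasurableSpace Ω]
    (μ : Measure Ω) [IsProbabilityMeasure μ]
    {m w d : ℕ} (hw : 0 < w) (hd : 0 < d)
    (H : Ω → Fin d → Fin m → Fin w) (hmeas : Measurable H)
    (hunif : ∀ (j : Fin d) (i : Fin m) (b : Fin w),
      μ {ω | H ω j i = b} = ((w : ENNReal))⁻¹)
    (hpair : ∀ (j : Fin d) (i i' : Fin m) (b b' : Fin w), i ≠ i' →
      μ {ω | H ω j i = b ∧ H ω j i' = b'} = ((w : ENNReal) * w)⁻¹)
    (hindep : iIndepFun (fun j ω => H ω j) μ)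
    (a : Fin m → ℝ) (ha : ∀ i, 0 ≤ a i) (i₀ : Fin m)
    (est : Ω → ℝ)
    (hest : ∀ ω, est ω = Finset.univ.inf' ⟨⟨0, hd⟩, Finset.mem_univ _⟩
      (fun j : Fin d => ∑ i ∈ Finset.univ.filter (fun i => H ω j i = H ω j i₀), a i)) :
    (∀ ω, a i₀ ≤ est ω) ∧
    ENNReal.ofReal (1 - Real.exp (-(d : ℝ))) ≤
      μ {ω | est ω ≤ a i₀ + (Real.exp 1 / w) * ∑ i, a i} := by
  have key1 : ∀ ω, a i₀ ≤ est ω := by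
    intro ω; rw [hest]
    apply Finset.le_inf'
    intro j _
    exact Finset.single_le_sum (fun i _ => ha i)
      (Finset.mem_filter.2 ⟨Finset.mem_univ _, rfl⟩)
  refine ⟨key1, ?_⟩
  set S := ∑ i, a i with hS
  have hS0 : 0 ≤ S := Finset.sum_nonneg fun i _ => ha i
  set t := Real.exp 1 / w * S with htd
  have hrow : ∀ ω j, (∑ i ∈ Finset.univ.filter (fun i => H ω j i = H ω j i₀), a i)
      = a i₀ + cmsX H a i₀ j ω := by
    intro ω j
    rw [Finset.sum_filter, ← Finset.add_sum_erase _ _ (Finset.mem_univ i₀), if_pos rfl]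
    rfl
  rcases eq_or_lt_of_le hS0 with hS0' | hSpos
  · -- degenerate case `S = 0`: every `a i = 0`
    have hz : ∀ i, a i = 0 := fun i =>
      (Finset.sum_eq_zero_iff_of_nonneg (fun i _ => ha i)).1 hS0'.symm i (Finset.mem_univ i)
    have hset : {ω | est ω ≤ a i₀ + t} = Set.univ := by
      ext ω
      simp only [Set.mem_setOf_eq, Set.mem_univ, iff_true]
      have hb : est ω ≤ 0 := by
        rw [hest]
        refine le_trans (Finset.inf'_le _ (Finset.mem_univ ⟨0, hd⟩)) ?_
        exact le_of_eq (Finset.sum_eq_zero fun i _ => hz i)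
      have : a i₀ + t = 0 := by rw [hz i₀, htd, ← hS0']; ring
      linarith
    rw [hset, measure_univ]
    exact ENNReal.ofReal_le_one.2 (by nlinarith [Real.exp_pos (-(d : ℝ))])
  · have hwR : (0 : ℝ) < w := Nat.cast_pos.2 hw
    have ht0 : 0 < t := by rw [htd]; positivity
    have hmeasj : ∀ j : Fin d, Measurable (fun ω => H ω j) :=
      fun j => (measurable_pi_apply j).comp hmeas
    have hmsets : ∀ (j : Fin d) (i : Fin m), MeasurableSet {ω | H ω j i = H ω j i₀} := by
      intro j i
      have h : {ω | H ω j i = H ω j i₀} = (fun ω => H ω j) ⁻¹' {g | g i = g i₀} := rfl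
      rw [h]
      exact (hmeasj j) (Set.to_countable _).measurableSet
    have hw0 : (w : ENNReal) ≠ 0 := Nat.cast_ne_zero.2 hw.ne'
    have hwt : (w : ENNReal) ≠ ⊤ := ENNReal.natCast_ne_top w
    have hcoll : ∀ (j : Fin d) (i : Fin m), i ≠ i₀ →
        μ {ω | H ω j i = H ω j i₀} = (w : ENNReal)⁻¹ := by
      intro j i hne
      have hdecomp : {ω | H ω j i = H ω j i₀}
          = ⋃ b : Fin w, {ω | H ω j i = b ∧ H ω j i₀ = b} := by
        ext ω
        simp only [Set.mem_setOf_eq, Set.mem_iUnion]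
        exact ⟨fun h => ⟨H ω j i₀, h, rfl⟩, fun ⟨b, h1, h2⟩ => h1.trans h2.symm⟩
      rw [hdecomp, measure_iUnion]
      · simp only [hpair j i i₀ _ _ hne]
        rw [tsum_fintype, Finset.sum_const, Finset.card_univ, Fintype.card_fin,
          nsmul_eq_mul, ENNReal.mul_inv (Or.inl hw0) (Or.inl hwt), ← mul_assoc,
          ENNReal.mul_inv_cancel hw0 hwt, one_mul]
      · intro b b' hbb'
        exact Set.disjoint_left.2 fun ω h1 h2 => hbb' (h1.1.symm.trans h2.1)
      · intro b
        have h : {ω | H ω j i = b ∧ H ω j i₀ = b}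
            = (fun ω => H ω j) ⁻¹' {g | g i = b ∧ g i₀ = b} := rfl
        rw [h]
        exact (hmeasj j) (Set.to_countable _).measurableSet
    have hifmeas : ∀ (j : Fin d) (i : Fin m),
        Measurable (fun ω => if H ω j i = H ω j i₀ then a i else 0) :=
      fun j i => Measurable.ite (hmsets j i) measurable_const measurable_const
    have hXmeas : ∀ j, Measurable (fun ω => cmsX H a i₀ j ω) :=
      fun j => Finset.measurable_sum _ fun i _ => hifmeas j i
    have hlint : ∀ j : Fin d, ∫⁻ ω, ENNReal.ofReal (cmsX H a i₀ j ω) ∂μ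
        = (∑ i ∈ Finset.univ.erase i₀, ENNReal.ofReal (a i)) * (w : ENNReal)⁻¹ := by
      intro j
      unfold cmsX
      have h1 : ∀ ω, ENNReal.ofReal
            (∑ i ∈ Finset.univ.erase i₀, if H ω j i = H ω j i₀ then a i else 0)
          = ∑ i ∈ Finset.univ.erase i₀,
              ENNReal.ofReal (if H ω j i = H ω j i₀ then a i else 0) := by
        intro ω
        exact ENNReal.ofReal_sum_of_nonneg fun i _ => by split <;> [exact ha i; exact le_rfl]
      simp_rw [h1]
      have hmterms : ∀ i ∈ Finset.univ.erase i₀,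
          Measurable fun ω => ENNReal.ofReal (if H ω j i = H ω j i₀ then a i else 0) :=
        fun i _ => ENNReal.measurable_ofReal.comp (hifmeas j i)
      rw [lintegral_finset_sum _ hmterms]
      have h2 : ∀ i ∈ Finset.univ.erase i₀,
          ∫⁻ ω, ENNReal.ofReal (if H ω j i = H ω j i₀ then a i else 0) ∂μ
          = ENNReal.ofReal (a i) * (w : ENNReal)⁻¹ := by
        intro i hi
        have hne : i ≠ i₀ := Finset.ne_of_mem_erase hi
        have h : (fun ω => ENNReal.ofReal (if H ω j i = H ω j i₀ then a i else 0))
            = Set.indicator {ω | H ω j i = H ω j i₀} (fun _ => ENNReal.ofReal (a i)) := by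
          ext ω
          by_cases h : H ω j i = H ω j i₀ <;> simp [Set.indicator, h]
        rw [h, lintegral_indicator_const (hmsets j i), hcoll j i hne]
      rw [Finset.sum_congr rfl h2, ← Finset.sum_mul]
    have hS'le : (∑ i ∈ Finset.univ.erase i₀, ENNReal.ofReal (a i)) ≤ ENNReal.ofReal S := by
      rw [hS, ENNReal.ofReal_sum_of_nonneg fun i _ => ha i]
      exact Finset.sum_le_sum_of_subset (Finset.subset_univ _)
    have hmarkov : ∀ j : Fin d,
        μ {ω | t < cmsX H a i₀ j ω} ≤ ENNReal.ofReal (Real.exp (-1)) := by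
      intro j
      have hsub : {ω | t < cmsX H a i₀ j ω}
          ⊆ {ω | ENNReal.ofReal t ≤ ENNReal.ofReal (cmsX H a i₀ j ω)} :=
        fun ω h => ENNReal.ofReal_le_ofReal h.le
      have hkey : Real.exp (-1) * t = S * (w : ℝ)⁻¹ := by
        rw [htd, Real.exp_neg]
        have he := Real.exp_ne_zero 1
        field_simp
      have h1 : ENNReal.ofReal t * μ {ω | t < cmsX H a i₀ j ω}
          ≤ ENNReal.ofReal (Real.exp (-1)) * ENNReal.ofReal t := by
        calc ENNReal.ofReal t * μ {ω | t < cmsX H a i₀ j ω}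
            ≤ ENNReal.ofReal t *
              μ {ω | ENNReal.ofReal t ≤ ENNReal.ofReal (cmsX H a i₀ j ω)} :=
              mul_le_mul_right (measure_mono hsub) _
          _ ≤ ∫⁻ ω, ENNReal.ofReal (cmsX H a i₀ j ω) ∂μ :=
              mul_meas_ge_le_lintegral₀
                ((ENNReal.measurable_ofReal.comp (hXmeas j)).aemeasurable) _
          _ = (∑ i ∈ Finset.univ.erase i₀, ENNReal.ofReal (a i)) * (w : ENNReal)⁻¹ :=
              hlint j
          _ ≤ ENNReal.ofReal S * (w : ENNReal)⁻¹ := mul_le_mul_left hS'le _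
          _ = ENNReal.ofReal (Real.exp (-1)) * ENNReal.ofReal t := by
              rw [← ENNReal.ofReal_mul (Real.exp_pos _).le, hkey,
                ENNReal.ofReal_mul hS0, ENNReal.ofReal_inv_of_pos hwR,
                ENNReal.ofReal_natCast]
      rw [mul_comm (ENNReal.ofReal t)] at h1
      exact (ENNReal.mul_le_mul_iff_left (ENNReal.ofReal_pos.2 ht0).ne' ENNReal.ofReal_ne_top).1 h1
    set A : Fin d → Set Ω := fun j => {ω | t < cmsX H a i₀ j ω} with hA
    have hAmeas : ∀ j, MeasurableSet (A j) :=
      fun j => measurableSet_lt measurable_const (hXmeas j)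
    have hAcomap : ∀ j, MeasurableSet[
        (inferInstance : MeasurableSpace (Fin m → Fin w)).comap (fun ω => H ω j)] (A j) :=
      fun j => ⟨{g | t < ∑ i ∈ Finset.univ.erase i₀, if g i = g i₀ then a i else 0},
        (Set.to_countable _).measurableSet, rfl⟩
    have hprod : μ (⋂ j, A j) = ∏ j, μ (A j) := hindep.meas_iInter hAcomap
    have hbound : μ (⋂ j, A j) ≤ ENNReal.ofReal (Real.exp (-(d : ℝ))) := by
      rw [hprod]
      calc ∏ j, μ (A j) ≤ ∏ _j : Fin d, ENNReal.ofReal (Real.exp (-1)) :=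
            Finset.prod_le_prod' fun j _ => hmarkov j
        _ = ENNReal.ofReal (Real.exp (-1)) ^ d := by
            rw [Finset.prod_const, Finset.card_univ, Fintype.card_fin]
        _ = ENNReal.ofReal (Real.exp (-1) ^ d) :=
            (ENNReal.ofReal_pow (Real.exp_pos _).le d).symm
        _ = ENNReal.ofReal (Real.exp (-(d : ℝ))) := by
            rw [← Real.exp_nat_mul]
            norm_num
    have hsubset : (⋂ j, A j)ᶜ ⊆ {ω | est ω ≤ a i₀ + t} := by
      intro ω hω
      simp only [Set.mem_compl_iff, Set.mem_iInter, not_forall] at hω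
      obtain ⟨j, hj⟩ := hω
      simp only [hA, Set.mem_setOf_eq, not_lt] at hj
      have hle : est ω ≤ a i₀ + cmsX H a i₀ j ω := by
        rw [hest, ← hrow ω j]
        exact Finset.inf'_le _ (Finset.mem_univ j)
      simp only [Set.mem_setOf_eq]
      linarith
    calc ENNReal.ofReal (1 - Real.exp (-(d : ℝ)))
        = 1 - ENNReal.ofReal (Real.exp (-(d : ℝ))) := by
          rw [ENNReal.ofReal_sub _ (Real.exp_pos _).le, ENNReal.ofReal_one]
      _ ≤ 1 - μ (⋂ j, A j) := tsub_le_tsub_left hbound 1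
      _ = μ ((⋂ j, A j)ᶜ) := (prob_compl_eq_one_sub (MeasurableSet.iInter hAmeas)).symm
      _ ≤ μ {ω | est ω ≤ a i₀ + t} := measure_mono hsubset
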